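/- Let n ≥ 2, let M be an invertible symmetric n×n real matrix, let b, c ∈ ℝⁿ be column vectors and let a₁, a₂, a₃ ∈ ℝ with a₁ ≠ 0. Writing b² = bᵀM⁻¹b, c² = cᵀM⁻¹c and b·c = bᵀM⁻¹c, one has det(a₁ M + a₂ b bᵀ + a₃ c cᵀ) = a₁^{n-2} · det(M) · [ (a₁ + a₂ b²)(a₁ + a₃ c²) − a₂ a₃ (b·c)² ]. -/

import Mathlib

open Matrix

/-- **Determinant identity for a rank-two perturbation of an invertible symmetric matrix.**
If `M` is an invertible symmetric `n × n` real matrix (`n ≥ 2`), `b c : ℝⁿ` and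
`a₁ ≠ 0`, then, writing `b² = bᵀM⁻¹b`, `c² = cᵀM⁻¹c`, `b·c = bᵀM⁻¹c`,
`det (a₁ M + a₂ b bᵀ + a₃ c cᵀ)
  = a₁ ^ (n-2) · det M · [(a₁ + a₂ b²)(a₁ + a₃ c²) − a₂ a₃ (b·c)²]`. -/
theorem det_add_rank_two_perturbation
    (n : ℕ) (hn : 2 ≤ n) (M : Matrix (Fin n) (Fin n) ℝ)
    (hMsymm : M.IsSymm) (hMinv : IsUnit M.det)
    (b c : Fin n → ℝ) (a₁ a₂ a₃ : ℝ) (ha₁ : a₁ ≠ 0) :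
    (a₁ • M + a₂ • vecMulVec b b + a₃ • vecMulVec c c).det
      = a₁ ^ (n - 2) * M.det *
        ((a₁ + a₂ * (b ⬝ᵥ M⁻¹ *ᵥ b)) * (a₁ + a₃ * (c ⬝ᵥ M⁻¹ *ᵥ c))
          - a₂ * a₃ * (b ⬝ᵥ M⁻¹ *ᵥ c) ^ 2) := by
  set A := M⁻¹ with hA
  have hMM : M * A = 1 := Matrix.mul_nonsing_inv M hMinv
  have hAsymm : Aᵀ = A := by
    rw [hA, Matrix.transpose_nonsing_inv, hMsymm.eq]
  have hAe : ∀ p q, A p q = A q p := fun p q => by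
    conv_lhs => rw [← hAsymm, Matrix.transpose_apply]
  set U : Matrix (Fin n) (Fin 2) ℝ :=
    Matrix.of fun i j => if j = 0 then a₂ * b i else a₃ * c i with hU
  set V : Matrix (Fin 2) (Fin n) ℝ :=
    Matrix.of fun j i => if j = 0 then b i else c i with hV
  have hUV : a₂ • vecMulVec b b + a₃ • vecMulVec c c = U * V := by
    ext i k
    simp [Matrix.mul_apply, vecMulVec_apply, Fin.sum_univ_two, hU, hV]
    ring
  have key : a₁ • M + a₂ • vecMulVec b b + a₃ • vecMulVec c c
      = M * (a₁ • (1 + a₁⁻¹ • ((A * U) * V))) := by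
    rw [add_assoc, hUV, Matrix.mul_smul, Matrix.mul_add, Matrix.mul_one,
      Matrix.mul_smul, ← Matrix.mul_assoc, ← Matrix.mul_assoc, hMM, Matrix.one_mul,
      smul_add, smul_smul, mul_inv_cancel₀ ha₁, one_smul]
  have hW : V * (a₁⁻¹ • (A * U)) =
      a₁⁻¹ • !![a₂ * (b ⬝ᵥ A *ᵥ b), a₃ * (b ⬝ᵥ A *ᵥ c);
                a₂ * (c ⬝ᵥ A *ᵥ b), a₃ * (c ⬝ᵥ A *ᵥ c)] := by
    ext j k
    fin_cases j <;> fin_cases k <;>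
      · simp only [Matrix.mul_apply, Matrix.smul_apply, Matrix.of_apply, hU, hV,
          smul_eq_mul, dotProduct, Matrix.mulVec, Matrix.cons_val_zero,
          Matrix.cons_val_one, Matrix.head_cons, Matrix.cons_val', Matrix.empty_val',
          Matrix.cons_val_fin_one, Matrix.head_fin_const, Fin.isValue, if_true, if_pos,
          Fin.mk_zero, Fin.mk_one, one_ne_zero, if_false, ite_false, ite_true, reduceIte]
        simp only [Finset.mul_sum, Finset.sum_mul]
        exact Finset.sum_congr rfl fun i _ => Finset.sum_congr rfl fun l _ => by ring
  have hcb : c ⬝ᵥ A *ᵥ b = b ⬝ᵥ A *ᵥ c := by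
    simp only [dotProduct, Matrix.mulVec, Finset.mul_sum, Finset.sum_mul]
    rw [Finset.sum_comm]
    exact Finset.sum_congr rfl fun i _ => Finset.sum_congr rfl fun l _ => by
      rw [hAe l i]; ring
  have hpow : a₁ ^ n = a₁ ^ (n - 2) * a₁ ^ 2 := by
    rw [← pow_add, Nat.sub_add_cancel hn]
  rw [key, Matrix.det_mul, Matrix.det_smul, Fintype.card_fin,
    ← Matrix.smul_mul, Matrix.det_one_add_mul_comm, hW, hcb]
  simp only [Matrix.det_fin_two, Matrix.add_apply, Matrix.one_apply, Matrix.smul_apply, Matrix.of_apply,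
    Matrix.cons_val', Matrix.cons_val_zero, Matrix.cons_val_one, Matrix.head_cons,
    Matrix.empty_val', Matrix.cons_val_fin_one, Matrix.head_fin_const, smul_eq_mul,
    if_true, one_ne_zero, zero_ne_one, if_false, ite_true, ite_false, reduceIte]
  rw [hpow]
  field_simp
  ring
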